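/- Let E be a finite-dimensional real inner product space, F : E → ℝ differentiable with ∇F L-Lipschitz (L > 0), and let g, n : Ω → E be independent square-integrable random vectors with E[n] = 0 and E[‖n‖²] = τ/K (τ ≥ 0, K > 0). Fix w ∈ E and constants μ_F, M_e, M_v, M_E, M_V > 0, δ ≥ 0, b > 0, and a real number F* such that ‖∇F(w)‖² ≥ 2δ(F(w) − F*) and F(w) ≥ F*. Assume ⟨∇F(w), E[g]⟩ ≥ μ_F‖∇F(w)‖² and E[‖g‖²] ≤ M_e + M_v/(Kb) + (M_E + M_V/(Kb))‖∇F(w)‖². Then for every η with 0 < η ≤ μ_F / (L(M_E + M_V/(Kb))), writing γ = F(w) − F*, it holds that E[F(w − η(g + n))] − F(w) ≤ −ημ_F δ γ + Lτη²/(2K) + (Lη²/2)(M_e + M_v/(Kb)). -/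

import Mathlib

open MeasureTheory ProbabilityTheory
open scoped RealInnerProductSpace

lemma descent_aux {E : Type*} [NormedAddCommGroup E] [InnerProductSpace ℝ E]
    [CompleteSpace E]
    (F : E → ℝ) (hF : Differentiable ℝ F) (L : ℝ)
    (hLip : ∀ a c : E, ‖gradient F a - gradient F c‖ ≤ L * ‖a - c‖) (x y : E) :
    F y ≤ F x + ⟪gradient F x, y - x⟫ + L / 2 * ‖y - x‖ ^ 2 := by
  set v := y - x with hv
  have hline : ∀ t : ℝ, HasDerivAt (fun t : ℝ => F (x + t • v))
      ⟪gradient F (x + t • v), v⟫ t := by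
    intro t
    have h1 : HasDerivAt (fun t : ℝ => x + t • v) v t := by
      simpa using ((hasDerivAt_id t).smul_const v).const_add x
    have h2 := (hF (x + t • v)).hasGradientAt.hasFDerivAt.comp_hasDerivAt t h1
    simpa [InnerProductSpace.toDual_apply_apply, Function.comp_def] using h2
  set ψ : ℝ → ℝ := fun t => F (x + t • v) - t * ⟪gradient F x, v⟫ - L / 2 * t ^ 2 * ‖v‖ ^ 2
    with hψ
  have hψd : ∀ t : ℝ, HasDerivAt ψ
      (⟪gradient F (x + t • v), v⟫ - ⟪gradient F x, v⟫ - L * t * ‖v‖ ^ 2) t := by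
    intro t
    have h1 : HasDerivAt (fun t : ℝ => t * ⟪gradient F x, v⟫) ⟪gradient F x, v⟫ t := by
      simpa using (hasDerivAt_id t).mul_const ⟪gradient F x, v⟫
    have h2 : HasDerivAt (fun t : ℝ => L / 2 * t ^ 2 * ‖v‖ ^ 2) (L * t * ‖v‖ ^ 2) t := by
      have := ((hasDerivAt_pow 2 t).const_mul (L / 2)).mul_const (‖v‖ ^ 2)
      exact this.congr_deriv (by ring)
    exact ((hline t).sub h1).sub h2
  have hanti : AntitoneOn ψ (Set.Icc 0 1) := by
    apply antitoneOn_of_deriv_nonpos (convex_Icc 0 1)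
    · exact fun t _ => ((hψd t).continuousAt).continuousWithinAt
    · exact fun t _ => ((hψd t).differentiableAt).differentiableWithinAt
    · intro t ht
      rw [interior_Icc] at ht
      rw [(hψd t).deriv]
      have h1 : ⟪gradient F (x + t • v), v⟫ - ⟪gradient F x, v⟫
          ≤ L * t * ‖v‖ ^ 2 := by
        rw [← inner_sub_left]
        calc ⟪gradient F (x + t • v) - gradient F x, v⟫
            ≤ ‖gradient F (x + t • v) - gradient F x‖ * ‖v‖ :=
              real_inner_le_norm _ _
          _ ≤ L * ‖(x + t • v) - x‖ * ‖v‖ := by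
              gcongr; exact hLip _ _
          _ = L * t * ‖v‖ ^ 2 := by
              simp [norm_smul, abs_of_pos ht.1]; ring
      linarith
  have h01 := hanti (Set.mem_Icc.2 ⟨le_refl 0, zero_le_one⟩)
    (Set.mem_Icc.2 ⟨zero_le_one, le_refl 1⟩) zero_le_one
  simp only [hψ, zero_smul, add_zero, one_smul, zero_mul, one_mul, zero_pow, mul_zero,
    sub_zero, one_pow, mul_one] at h01
  have : x + v = y := by rw [hv]; abel
  rw [this] at h01
  linarith

lemma inner_indep_zero {Ω E : Type*} [NormedAddCommGroup E] [InnerProductSpace ℝ E]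
    [FiniteDimensional ℝ E] [MeasurableSpace E] [BorelSpace E]
    [MeasureSpace Ω] [IsProbabilityMeasure (ℙ : Measure Ω)]
    (g n : Ω → E) (hgn : IndepFun g n ℙ) (hg : MemLp g 2 ℙ) (hn : MemLp n 2 ℙ)
    (hn0 : (∫ ω, n ω) = 0) : (∫ ω, ⟪g ω, n ω⟫) = 0 := by
  classical
  set bE := stdOrthonormalBasis ℝ E with hbE
  have hgi : Integrable g ℙ := hg.integrable one_le_two
  have hni : Integrable n ℙ := hn.integrable one_le_two
  have hm1 : ∀ i, Measurable (fun x : E => ⟪x, bE i⟫) := fun i =>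
    measurable_id.inner_const
  have hm2 : ∀ i, Measurable (fun x : E => ⟪bE i, x⟫) := fun i =>
    measurable_id.const_inner
  have hind : ∀ i, IndepFun (fun ω => ⟪g ω, bE i⟫) (fun ω => ⟪bE i, n ω⟫) ℙ := fun i =>
    hgn.comp (hm1 i) (hm2 i)
  have hint : ∀ i, Integrable (fun ω => ⟪g ω, bE i⟫ * ⟪bE i, n ω⟫) ℙ := fun i =>
    (hind i).integrable_mul
      (by simpa [real_inner_comm] using hgi.const_inner (𝕜 := ℝ) (bE i))
      (hni.const_inner (𝕜 := ℝ) (bE i))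
  calc (∫ ω, ⟪g ω, n ω⟫) = ∫ ω, ∑ i, ⟪g ω, bE i⟫ * ⟪bE i, n ω⟫ := by
        simp_rw [bE.sum_inner_mul_inner]
    _ = ∑ i, ∫ ω, ⟪g ω, bE i⟫ * ⟪bE i, n ω⟫ := integral_finset_sum _ fun i _ => hint i
    _ = 0 := by
        apply Finset.sum_eq_zero
        intro i _
        have h := (hind i).integral_mul_eq_mul_integral
          (hgi.aestronglyMeasurable.inner aestronglyMeasurable_const)
          (aestronglyMeasurable_const.inner hni.aestronglyMeasurable)
        have h2 : (∫ ω, ⟪bE i, n ω⟫) = 0 := by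
          rw [integral_inner hni (bE i), hn0, inner_zero_right]
        simpa [Pi.mul_apply, h2] using h

/-- Descent lemma combined with the Polyak–Łojasiewicz inequality:
under the moment assumptions, if `‖∇F(w)‖² ≥ 2δ(F(w) − F*)` and `F(w) ≥ F*`, then for any
step size `0 < η ≤ μ_F / (L(M_E + M_V/(Kb)))`, writing `γ = F(w) − F*`,
`E[F(w − η(g+n))] − F(w) ≤ −ημ_F δ γ + Lτη²/(2K) + (Lη²/2)(M_e + M_v/(Kb))`. -/
theorem stmt3
    {E : Type*} [NormedAddCommGroup E] [InnerProductSpace ℝ E] [FiniteDimensional ℝ E]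
    [MeasurableSpace E] [BorelSpace E]
    {Ω : Type*} [MeasureSpace Ω] [IsProbabilityMeasure (ℙ : Measure Ω)]
    (F : E → ℝ) (hF : Differentiable ℝ F)
    (L : ℝ) (hL : 0 < L)
    (hLip : ∀ w w' : E, ‖gradient F w - gradient F w'‖ ≤ L * ‖w - w'‖)
    (g n : Ω → E)
    (hgn : IndepFun g n ℙ)
    (hg : MemLp g 2 ℙ) (hn : MemLp n 2 ℙ)
    (hn0 : (∫ ω, n ω) = 0)
    (τ K : ℝ) (hτ : 0 ≤ τ) (hK : 0 < K)
    (hn2 : (∫ ω, ‖n ω‖ ^ 2) = τ / K)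
    (w : E)
    (μF Me Mv ME MV b δ Fstar : ℝ)
    (hμF : 0 < μF) (hMe : 0 < Me) (hMv : 0 < Mv) (hME : 0 < ME) (hMV : 0 < MV)
    (hb : 0 < b) (hδ : 0 ≤ δ)
    (hPL : ‖gradient F w‖ ^ 2 ≥ 2 * δ * (F w - Fstar))
    (hFstar : F w ≥ Fstar)
    (hfirst : ⟪gradient F w, ∫ ω, g ω⟫ ≥ μF * ‖gradient F w‖ ^ 2)
    (hsecond : (∫ ω, ‖g ω‖ ^ 2) ≤
      Me + Mv / (K * b) + (ME + MV / (K * b)) * ‖gradient F w‖ ^ 2)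
    (η : ℝ) (hη : 0 < η) (hηle : η ≤ μF / (L * (ME + MV / (K * b)))) :
    (∫ ω, F (w - η • (g ω + n ω))) - F w ≤
      -(η * μF * δ * (F w - Fstar)) + L * τ * η ^ 2 / (2 * K)
        + (L * η ^ 2 / 2) * (Me + Mv / (K * b)) := by
  classical
  set G := gradient F w with hG
  set u : Ω → E := fun ω => g ω + n ω with hu
  have hu2 : MemLp u 2 ℙ := hg.add hn
  have hu1 : Integrable u ℙ := hu2.integrable one_le_two
  have hgi : Integrable g ℙ := hg.integrable one_le_two
  have hni : Integrable n ℙ := hn.integrable one_le_two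
  have husq : Integrable (fun ω => ‖u ω‖ ^ 2) ℙ :=
    (memLp_two_iff_integrable_sq_norm hu2.aestronglyMeasurable).1 hu2
  have hgsq : Integrable (fun ω => ‖g ω‖ ^ 2) ℙ :=
    (memLp_two_iff_integrable_sq_norm hg.aestronglyMeasurable).1 hg
  have hnsq : Integrable (fun ω => ‖n ω‖ ^ 2) ℙ :=
    (memLp_two_iff_integrable_sq_norm hn.aestronglyMeasurable).1 hn
  have hGg : Integrable (fun ω => ⟪G, g ω⟫) ℙ := hgi.const_inner (𝕜 := ℝ) G
  have hGn : Integrable (fun ω => ⟪G, n ω⟫) ℙ := hni.const_inner (𝕜 := ℝ) G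
  -- pointwise descent bound
  have hpt : ∀ ω, F (w - η • u ω) ≤
      F w - η * ⟪G, g ω⟫ - η * ⟪G, n ω⟫ + L * η ^ 2 / 2 * ‖u ω‖ ^ 2 := by
    intro ω
    have h := descent_aux F hF L hLip w (w - η • u ω)
    have h1 : w - η • u ω - w = -(η • u ω) := by abel
    rw [h1] at h
    have h2 : ⟪G, -(η • u ω)⟫ = -(η * ⟪G, g ω⟫) - η * ⟪G, n ω⟫ := by
      rw [inner_neg_right, real_inner_smul_right, hu]
      rw [inner_add_right]; ring
    have h3 : ‖-(η • u ω)‖ ^ 2 = η ^ 2 * ‖u ω‖ ^ 2 := by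
      rw [norm_neg, norm_smul]
      simp [abs_of_pos hη, mul_pow]
    rw [h2, h3] at h
    calc F (w - η • u ω) ≤ F w + (-(η * ⟪G, g ω⟫) - η * ⟪G, n ω⟫)
          + L / 2 * (η ^ 2 * ‖u ω‖ ^ 2) := h
      _ = F w - η * ⟪G, g ω⟫ - η * ⟪G, n ω⟫ + L * η ^ 2 / 2 * ‖u ω‖ ^ 2 := by ring
  -- pointwise lower bound (for integrability)
  have hlow : ∀ ω, F w - η * ‖G‖ * ‖u ω‖ - 3 * L * η ^ 2 / 2 * ‖u ω‖ ^ 2 ≤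
      F (w - η • u ω) := by
    intro ω
    have h := descent_aux F hF L hLip (w - η • u ω) w
    have h1 : w - (w - η • u ω) = η • u ω := by abel
    rw [h1] at h
    have h2 : ⟪gradient F (w - η • u ω), η • u ω⟫ ≤
        η * ‖G‖ * ‖u ω‖ + L * η ^ 2 * ‖u ω‖ ^ 2 := by
      calc ⟪gradient F (w - η • u ω), η • u ω⟫
          ≤ ‖gradient F (w - η • u ω)‖ * ‖η • u ω‖ := real_inner_le_norm _ _
        _ ≤ (‖G‖ + L * (η * ‖u ω‖)) * (η * ‖u ω‖) := by
            apply mul_le_mul _ _ (norm_nonneg _) (by positivity)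
            · have hli := hLip (w - η • u ω) w
              have : ‖gradient F (w - η • u ω)‖ ≤ ‖G‖ + L * ‖w - η • u ω - w‖ := by
                have h9 := norm_sub_norm_le (gradient F (w - η • u ω)) (gradient F w)
                rw [hG]
                linarith [hli, h9]
              have h4 : ‖w - η • u ω - w‖ = η * ‖u ω‖ := by
                have : w - η • u ω - w = -(η • u ω) := by abel
                rw [this, norm_neg, norm_smul, Real.norm_eq_abs, abs_of_pos hη]
              rwa [h4] at this
            · rw [norm_smul, Real.norm_eq_abs, abs_of_pos hη]
        _ = η * ‖G‖ * ‖u ω‖ + L * η ^ 2 * ‖u ω‖ ^ 2 := by ring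
    have h3 : ‖η • u ω‖ ^ 2 = η ^ 2 * ‖u ω‖ ^ 2 := by
      rw [norm_smul, Real.norm_eq_abs, abs_of_pos hη, mul_pow]
    rw [h3] at h
    linarith [h, h2]
  -- integrability of the left-hand side
  have hLHSm : AEStronglyMeasurable (fun ω => F (w - η • u ω)) ℙ := by
    have : AEStronglyMeasurable (fun ω => w - η • u ω) ℙ :=
      aestronglyMeasurable_const.sub (hu2.aestronglyMeasurable.const_smul η)
    exact (hF.continuous.comp_aestronglyMeasurable this)
  have hbound : Integrable (fun ω => |F w| + η * ‖G‖ * ‖u ω‖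
      + 3 * L * η ^ 2 / 2 * ‖u ω‖ ^ 2 + L * η ^ 2 / 2 * ‖u ω‖ ^ 2
      + η * ‖G‖ * ‖u ω‖) ℙ := by
    have h1 : Integrable (fun ω => ‖u ω‖) ℙ := hu1.norm
    exact ((((integrable_const _).add (h1.const_mul _)).add
      (husq.const_mul _)).add (husq.const_mul _)).add (h1.const_mul _)
  have hLHSi : Integrable (fun ω => F (w - η • u ω)) ℙ := by
    apply hbound.mono' hLHSm
    filter_upwards with ω
    have hsplit : ⟪G, g ω⟫ + ⟪G, n ω⟫ = ⟪G, u ω⟫ := by rw [hu]; rw [inner_add_right]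
    have h6 : -(‖G‖ * ‖u ω‖) ≤ ⟪G, u ω⟫ := by
      have := abs_real_inner_le_norm G (u ω)
      linarith [neg_abs_le (⟪G, u ω⟫ : ℝ)]
    have h7 : ⟪G, u ω⟫ ≤ ‖G‖ * ‖u ω‖ := real_inner_le_norm _ _
    have h8 : η * -(‖G‖ * ‖u ω‖) ≤ η * ⟪G, u ω⟫ := mul_le_mul_of_nonneg_left h6 hη.le
    have h9 : η * ⟪G, u ω⟫ ≤ η * (‖G‖ * ‖u ω‖) := mul_le_mul_of_nonneg_left h7 hη.le
    have hBnn : (0:ℝ) ≤ L * η ^ 2 * ‖u ω‖ ^ 2 := by positivity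
    have hsplit' : η * ⟪G, g ω⟫ + η * ⟪G, n ω⟫ = η * ⟪G, u ω⟫ := by
      rw [← mul_add, hsplit]
    rw [Real.norm_eq_abs, abs_le]
    constructor
    · linarith [hlow ω, neg_abs_le (F w)]
    · linarith [hpt ω, le_abs_self (F w), hsplit']
  -- integrate
  have hRHSi : Integrable (fun ω => F w - η * ⟪G, g ω⟫ - η * ⟪G, n ω⟫
      + L * η ^ 2 / 2 * ‖u ω‖ ^ 2) ℙ :=
    (((integrable_const _).sub (hGg.const_mul η)).sub (hGn.const_mul η)).add
      (husq.const_mul _)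
  have hmono : (∫ ω, F (w - η • u ω)) ≤
      ∫ ω, (F w - η * ⟪G, g ω⟫ - η * ⟪G, n ω⟫ + L * η ^ 2 / 2 * ‖u ω‖ ^ 2) :=
    integral_mono hLHSi hRHSi hpt
  have hginteg : (∫ ω, ⟪G, g ω⟫) = ⟪G, ∫ ω, g ω⟫ := integral_inner hgi G
  have hninteg : (∫ ω, ⟪G, n ω⟫) = 0 := by
    rw [integral_inner hni G, hn0, inner_zero_right]
  have hcross : (∫ ω, ⟪g ω, n ω⟫) = 0 := inner_indep_zero g n hgn hg hn hn0
  have hcrossi : Integrable (fun ω => ⟪g ω, n ω⟫) ℙ := by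
    have hind : IndepFun (fun ω => ‖g ω‖) (fun ω => ‖n ω‖) ℙ :=
      hgn.comp measurable_norm measurable_norm
    have h1 : Integrable (fun ω => ‖g ω‖ * ‖n ω‖) ℙ :=
      hind.integrable_mul hgi.norm hni.norm
    apply h1.mono' (hg.aestronglyMeasurable.inner hn.aestronglyMeasurable)
    filter_upwards with ω
    simpa using abs_real_inner_le_norm (g ω) (n ω)
  have husq_int : (∫ ω, ‖u ω‖ ^ 2) = (∫ ω, ‖g ω‖ ^ 2) + τ / K := by
    have hexp : ∀ ω, ‖u ω‖ ^ 2 = ‖g ω‖ ^ 2 + 2 * ⟪g ω, n ω⟫ + ‖n ω‖ ^ 2 := by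
      intro ω; rw [hu]; exact norm_add_sq_real _ _
    calc (∫ ω, ‖u ω‖ ^ 2) = ∫ ω, (‖g ω‖ ^ 2 + 2 * ⟪g ω, n ω⟫ + ‖n ω‖ ^ 2) := by
          simp_rw [hexp]
      _ = (∫ ω, ‖g ω‖ ^ 2) + 2 * (∫ ω, ⟪g ω, n ω⟫) + ∫ ω, ‖n ω‖ ^ 2 := by
          have i2 : Integrable (fun ω => 2 * ⟪g ω, n ω⟫) ℙ := hcrossi.const_mul 2
          have i1 : Integrable (fun ω => ‖g ω‖ ^ 2 + 2 * ⟪g ω, n ω⟫) ℙ := hgsq.add i2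
          rw [integral_add i1 hnsq, integral_add hgsq i2, integral_const_mul]
      _ = (∫ ω, ‖g ω‖ ^ 2) + τ / K := by rw [hcross, hn2]; ring
  have hRHSval : (∫ ω, (F w - η * ⟪G, g ω⟫ - η * ⟪G, n ω⟫
      + L * η ^ 2 / 2 * ‖u ω‖ ^ 2))
      = F w - η * ⟪G, ∫ ω, g ω⟫ + L * η ^ 2 / 2 * ((∫ ω, ‖g ω‖ ^ 2) + τ / K) := by
    have j3 : Integrable (fun ω => η * ⟪G, g ω⟫) ℙ := hGg.const_mul η
    have j4 : Integrable (fun ω => η * ⟪G, n ω⟫) ℙ := hGn.const_mul η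
    have j5 : Integrable (fun ω => L * η ^ 2 / 2 * ‖u ω‖ ^ 2) ℙ := husq.const_mul _
    have j1 : Integrable (fun ω => F w - η * ⟪G, g ω⟫) ℙ := (integrable_const _).sub j3
    have j2 : Integrable (fun ω => F w - η * ⟪G, g ω⟫ - η * ⟪G, n ω⟫) ℙ := j1.sub j4
    rw [integral_add j2 j5, integral_sub j1 j4, integral_sub (integrable_const _) j3,
      integral_const_mul, integral_const_mul, integral_const_mul, integral_const,
      hginteg, hninteg, husq_int]
    simp
  rw [hRHSval] at hmono
  -- final algebra
  set N := ‖G‖ ^ 2 with hN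
  have hNnn : 0 ≤ N := sq_nonneg _
  have hC : 0 < ME + MV / (K * b) := by positivity
  have hstep : η * (L * (ME + MV / (K * b))) ≤ μF := by
    rw [le_div_iff₀ (by positivity)] at hηle
    linarith
  have hin : ⟪G, ∫ ω, g ω⟫ ≥ μF * N := hfirst
  have key : (∫ ω, F (w - η • u ω)) - F w ≤
      -(η * μF / 2 * N) + L * η ^ 2 / 2 * (Me + Mv / (K * b)) + L * η ^ 2 / 2 * (τ / K) := by
    have h1 : L * η ^ 2 / 2 * ((∫ ω, ‖g ω‖ ^ 2) + τ / K) ≤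
        L * η ^ 2 / 2 * (Me + Mv / (K * b) + (ME + MV / (K * b)) * N + τ / K) := by
      apply mul_le_mul_of_nonneg_left _ (by positivity)
      linarith [hsecond]
    have h2 : L * η ^ 2 / 2 * ((ME + MV / (K * b)) * N) ≤ η * μF / 2 * N := by
      have : L * η ^ 2 / 2 * ((ME + MV / (K * b)) * N)
          = (η * (L * (ME + MV / (K * b)))) * η * N / 2 := by ring
      rw [this]
      have := mul_le_mul_of_nonneg_right (mul_le_mul_of_nonneg_right hstep hη.le)
        hNnn
      linarith
    have h3 : η * (μF * N) ≤ η * ⟪G, ∫ ω, g ω⟫ := mul_le_mul_of_nonneg_left hin hη.le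
    linarith [hmono, h1, h2, h3]
  have hPL2 : η * μF * δ * (F w - Fstar) ≤ η * μF / 2 * N := by
    have h1 : 2 * δ * (F w - Fstar) ≤ N := hPL
    have h2 : (0:ℝ) ≤ η * μF / 2 := by positivity
    have := mul_le_mul_of_nonneg_left h1 h2
    linarith
  have hfin : L * η ^ 2 / 2 * (τ / K) = L * τ * η ^ 2 / (2 * K) := by
    field_simp
  linarith [key, hPL2, hfin.le]
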